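/- arXiv:1906.00028 — 4 statements merged into one kernel-verified Lean document; each statement's English description precedes it below -/
import Mathlib

section
/- Let X have density f, positive-definite covariance Σ = Cov X, and let A be invertible, b ∈ ℝ^d, m ∈ ℝ^d. Then A · X_{[m]} + b has the same distribution as (A X + b)_{[A m + b]}, where the Gaussian weight for A X + b uses covariance A Σ Aᵀ. -/
open MeasureTheory Matrix

/-- The multivariate normal density `N(m, Σ)` on `ℝ^d`. -/
noncomputable def mvNormalPdf {d : ℕ} (m : Fin d → ℝ) (S : Matrix (Fin d) (Fin d) ℝ)
    (x : Fin d → ℝ) : ℝ :=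
  (2 * Real.pi) ^ (-(d : ℝ) / 2) * S.det ^ (-(1 : ℝ) / 2) *
    Real.exp (-(1 / 2) * ((x - m) ⬝ᵥ (S⁻¹ *ᵥ (x - m))))

/-- Mean of a random vector with density `f` (w.r.t. Lebesgue measure on `ℝ^d`). -/
noncomputable def densMean {d : ℕ} (f : (Fin d → ℝ) → ℝ) (i : Fin d) : ℝ :=
  ∫ x : Fin d → ℝ, x i * f x

/-- Covariance matrix of a random vector with density `f`. -/
noncomputable def densCov {d : ℕ} (f : (Fin d → ℝ) → ℝ) : Matrix (Fin d) (Fin d) ℝ :=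
  fun i j => ∫ x : Fin d → ℝ, (x i - densMean f i) * (x j - densMean f j) * f x

lemma measurable_mvNormalPdf {d : ℕ} (m : Fin d → ℝ) (S : Matrix (Fin d) (Fin d) ℝ) :
    Measurable (mvNormalPdf m S) := by
  have h : Measurable fun x : Fin d → ℝ => (x - m) ⬝ᵥ (S⁻¹ *ᵥ (x - m)) := by
    show Measurable fun x : Fin d → ℝ => ∑ i, (x - m) i * ∑ j, S⁻¹ i j * (x - m) j
    apply Finset.measurable_sum
    intro i _
    apply Measurable.mul
    · fun_prop
    · apply Finset.measurable_sum
      intro j _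
      fun_prop
  exact measurable_const.mul ((h.const_mul _).exp)

lemma map_withDensity_comp {α β : Type*} [MeasurableSpace α] [MeasurableSpace β]
    {e : α → β} (he : Measurable e) (μ : Measure α) {g : β → ENNReal} (hg : Measurable g) :
    Measure.map e (μ.withDensity (fun x => g (e x))) = (Measure.map e μ).withDensity g := by
  ext s hs
  rw [Measure.map_apply he hs, withDensity_apply _ (he hs), withDensity_apply _ hs,
    Measure.restrict_map he hs, lintegral_map hg he]

lemma mvNormalPdf_affine {d : ℕ} (m b : Fin d → ℝ) (S A : Matrix (Fin d) (Fin d) ℝ)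
    (hS : Sᵀ = S) (hSdet : 0 < S.det) (hA : A.det ≠ 0) (x : Fin d → ℝ) :
    mvNormalPdf (A *ᵥ m + b) (A * S * Aᵀ) (A *ᵥ x + b) = mvNormalPdf m S x / |A.det| := by
  have hu : IsUnit A.det := isUnit_iff_ne_zero.mpr hA
  have hdet : (A * S * Aᵀ).det = A.det ^ 2 * S.det := by
    simp [Matrix.det_mul, Matrix.det_transpose]; ring
  have hsub : (A *ᵥ x + b) - (A *ᵥ m + b) = A *ᵥ (x - m) := by
    simp [Matrix.mulVec_sub]
  have hquad : ((A *ᵥ x + b) - (A *ᵥ m + b)) ⬝ᵥ ((A * S * Aᵀ)⁻¹ *ᵥ ((A *ᵥ x + b) - (A *ᵥ m + b)))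
      = (x - m) ⬝ᵥ (S⁻¹ *ᵥ (x - m)) := by
    rw [hsub]
    rw [Matrix.mul_inv_rev, Matrix.mul_inv_rev]
    rw [Matrix.mulVec_mulVec]
    have h2 : Aᵀ⁻¹ * (S⁻¹ * A⁻¹) * A = Aᵀ⁻¹ * S⁻¹ := by
      rw [Matrix.mul_assoc, Matrix.mul_assoc, Matrix.nonsing_inv_mul A hu, Matrix.mul_one]
    rw [h2]
    rw [← Matrix.mulVec_mulVec, Matrix.dotProduct_mulVec]
    have h3 : (A *ᵥ (x - m)) ᵥ* Aᵀ⁻¹ = x - m := by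
      rw [← Matrix.transpose_nonsing_inv, Matrix.vecMul_transpose, Matrix.mulVec_mulVec,
        Matrix.nonsing_inv_mul A hu, Matrix.one_mulVec]
    rw [h3]
  unfold mvNormalPdf
  rw [hquad, hdet]
  have h1 : (A.det ^ 2 * S.det) ^ (-(1:ℝ)/2) = |A.det|⁻¹ * S.det ^ (-(1:ℝ)/2) := by
    rw [Real.mul_rpow (by positivity) hSdet.le]
    congr 1
    rw [show A.det ^ 2 = |A.det| ^ 2 by rw [sq_abs]]
    rw [← Real.rpow_natCast |A.det| 2, ← Real.rpow_mul (abs_nonneg _)]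
    norm_num
    simp [Real.rpow_neg_one]
  rw [h1]
  ring

theorem affine_equivariance_of_gaussian_weighting {d : ℕ}
    (f : (Fin d → ℝ) → ℝ) (A : Matrix (Fin d) (Fin d) ℝ) (b m : Fin d → ℝ)
    (hf0 : ∀ x, 0 ≤ f x) (hfm : Measurable f) (hf1 : ∫ x, f x = 1)
    (hint1 : ∀ i, Integrable fun x : Fin d → ℝ => x i * f x)
    (hint2 : ∀ i j, Integrable fun x : Fin d → ℝ => x i * x j * f x)
    (hpd : (densCov f).PosDef) (hA : IsUnit A.det) :
    Measure.map (fun x => A *ᵥ x + b)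
        (volume.withDensity fun x =>
          ENNReal.ofReal
            (mvNormalPdf m (densCov f) x * f x /
              ∫ z, mvNormalPdf m (densCov f) z * f z)) =
      volume.withDensity fun y =>
        ENNReal.ofReal
          (mvNormalPdf (A *ᵥ m + b) (A * densCov f * Aᵀ) y *
              (f (A⁻¹ *ᵥ (y - b)) / |A.det|) /
            ∫ z, mvNormalPdf (A *ᵥ m + b) (A * densCov f * Aᵀ) z *
              (f (A⁻¹ *ᵥ (z - b)) / |A.det|)) := by
  classical
  set S := densCov f with hSdef
  have hdet : A.det ≠ 0 := hA.ne_zero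
  have habs : (0:ℝ) < |A.det| := abs_pos.mpr hdet
  have hSdet : 0 < S.det := hpd.det_pos
  have hSymm : Sᵀ = S := by
    ext i j
    simp only [Matrix.transpose_apply, hSdef, densCov]
    congr 1
    funext x
    ring
  set c : ℝ := ∫ z, mvNormalPdf m S z * f z with hc
  set T : (Fin d → ℝ) → (Fin d → ℝ) := fun x => A *ᵥ x + b with hT
  have hmulmeas : ∀ (B : Matrix (Fin d) (Fin d) ℝ), Measurable fun x : Fin d → ℝ => B *ᵥ x := by
    intro B
    apply measurable_pi_lambda
    intro i
    show Measurable fun x : Fin d → ℝ => ∑ j, B i j * x j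
    apply Finset.measurable_sum
    intro j _
    fun_prop
  have hTmeas : Measurable T := (hmulmeas A).add_const b
  have hT'meas : Measurable fun y : Fin d → ℝ => A⁻¹ *ᵥ (y - b) :=
    (hmulmeas A⁻¹).comp (measurable_id.sub_const b)
  have hTinv : ∀ x, A⁻¹ *ᵥ (T x - b) = x := by
    intro x
    simp only [hT, add_sub_cancel_right, Matrix.mulVec_mulVec,
      Matrix.nonsing_inv_mul A hA, Matrix.one_mulVec]
  have hTsurj : ∀ y, T (A⁻¹ *ᵥ (y - b)) = y := by
    intro y
    simp only [hT, Matrix.mulVec_mulVec, Matrix.mul_nonsing_inv A hA, Matrix.one_mulVec,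
      sub_add_cancel]
  -- pushforward of Lebesgue under T
  have hmapvol : Measure.map T volume = ENNReal.ofReal |A.det|⁻¹ • volume := by
    have h1 : Measure.map (fun x : Fin d → ℝ => A *ᵥ x) volume
        = ENNReal.ofReal |A.det|⁻¹ • volume := by
      have h := Real.map_matrix_volume_pi_eq_smul_volume_pi (M := A) hdet
      have he : ⇑(Matrix.toLin' A) = fun x : Fin d → ℝ => A *ᵥ x := by
        funext x; exact Matrix.toLin'_apply A x
      rw [he] at h
      rw [h, abs_inv]
    have hcomp : T = (fun y => y + b) ∘ (fun x : Fin d → ℝ => A *ᵥ x) := rfl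
    rw [hcomp, ← Measure.map_map (measurable_add_const b) (hmulmeas A), h1,
      Measure.map_smul, map_add_right_eq_self volume b]
  -- the key pdf identity
  have key : ∀ z, mvNormalPdf (A *ᵥ m + b) (A * S * Aᵀ) z
      = mvNormalPdf m S (A⁻¹ *ᵥ (z - b)) / |A.det| := by
    intro z
    conv_lhs => rw [← hTsurj z]
    exact mvNormalPdf_affine m b S A hSymm hSdet hdet _
  -- the normalizing constant identity
  have hψmeas : Measurable fun x : Fin d → ℝ =>
      mvNormalPdf m S x / |A.det| * (f x / |A.det|) :=
    ((measurable_mvNormalPdf m S).div_const _).mul (hfm.div_const _)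
  have hcint : (∫ z, mvNormalPdf (A *ᵥ m + b) (A * S * Aᵀ) z *
      (f (A⁻¹ *ᵥ (z - b)) / |A.det|)) = c / |A.det| := by
    have e1 : (fun z => mvNormalPdf (A *ᵥ m + b) (A * S * Aᵀ) z *
        (f (A⁻¹ *ᵥ (z - b)) / |A.det|))
        = fun z => (fun x => mvNormalPdf m S x / |A.det| * (f x / |A.det|)) (A⁻¹ *ᵥ (z - b)) := by
      funext z
      simp only [key z]
    rw [e1]
    have hmap' : Measure.map (fun y : Fin d → ℝ => A⁻¹ *ᵥ (y - b)) volume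
        = ENNReal.ofReal |A.det| • volume := by
      have hdet' : A⁻¹.det ≠ 0 := by
        rw [Matrix.det_nonsing_inv, Ring.inverse_eq_inv']
        exact inv_ne_zero hdet
      have h1 : Measure.map (fun x : Fin d → ℝ => A⁻¹ *ᵥ x) volume
          = ENNReal.ofReal |A.det| • volume := by
        have h := Real.map_matrix_volume_pi_eq_smul_volume_pi (M := A⁻¹) hdet'
        have he : ⇑(Matrix.toLin' A⁻¹) = fun x : Fin d → ℝ => A⁻¹ *ᵥ x := by
          funext x; exact Matrix.toLin'_apply A⁻¹ x
        rw [he] at h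
        rw [h, Matrix.det_nonsing_inv, Ring.inverse_eq_inv']
        simp [abs_inv]
      have hcomp : (fun y : Fin d → ℝ => A⁻¹ *ᵥ (y - b))
          = (fun x : Fin d → ℝ => A⁻¹ *ᵥ x) ∘ (fun y => y + (-b)) := by
        funext y; simp [sub_eq_add_neg]
      rw [hcomp, ← Measure.map_map (hmulmeas A⁻¹) (measurable_add_const (-b)),
        map_add_right_eq_self volume (-b), h1]
    calc ∫ z, (fun x => mvNormalPdf m S x / |A.det| * (f x / |A.det|)) (A⁻¹ *ᵥ (z - b))
        = ∫ y, mvNormalPdf m S y / |A.det| * (f y / |A.det|)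
            ∂(Measure.map (fun z : Fin d → ℝ => A⁻¹ *ᵥ (z - b)) volume) :=
          (integral_map hT'meas.aemeasurable hψmeas.aestronglyMeasurable).symm
      _ = |A.det| * ∫ y, mvNormalPdf m S y / |A.det| * (f y / |A.det|) := by
          rw [hmap', integral_smul_measure, ENNReal.toReal_ofReal habs.le, smul_eq_mul]
      _ = |A.det| * ∫ y, mvNormalPdf m S y * f y / (|A.det| * |A.det|) := by
          congr 1; apply integral_congr_ae; filter_upwards with y; ring
      _ = c / |A.det| := by
          rw [integral_div, hc]
          field_simp
  -- now the measure computation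
  set g : (Fin d → ℝ) → ENNReal := fun y =>
    ENNReal.ofReal (mvNormalPdf m S (A⁻¹ *ᵥ (y - b)) * f (A⁻¹ *ᵥ (y - b)) / c) with hgdef
  have hgmeas : Measurable g :=
    ENNReal.measurable_ofReal.comp
      ((((measurable_mvNormalPdf m S).comp hT'meas).mul (hfm.comp hT'meas)).div_const c)
  have hgd : (fun x => ENNReal.ofReal (mvNormalPdf m S x * f x / c)) = fun x => g (T x) := by
    funext x
    simp only [hgdef, hTinv x]
  rw [hgd, map_withDensity_comp hTmeas volume hgmeas, hmapvol, withDensity_smul_measure,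
    ← withDensity_smul _ hgmeas]
  refine congrArg _ (funext fun y => ?_)
  simp only [Pi.smul_apply, smul_eq_mul, hgdef]
  rw [hcint, key y, ← ENNReal.ofReal_mul (by positivity)]
  congr 1
  by_cases hc0 : c = 0
  · simp [hc0]
  · field_simp
end

section
/- Let Σ₁, Σ₂ be symmetric positive-definite d×d matrices such that Σ₁⁻¹ Σ₂ has d distinct eigenvalues. If W₁ and W₂ are invertible matrices each simultaneously diagonalizing Σ₁ and Σ₂, then W₂ = W₁ P D for some permutation matrix P and invertible diagonal matrix D (i.e., W is unique up to rescaling and permutation of columns). -/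
open Matrix Polynomial

private lemma my_charpoly_conj {n : Type*} [Fintype n] [DecidableEq n]
    (P M : Matrix n n ℝ) (hP : IsUnit P.det) :
    (P * M * P⁻¹).charpoly = M.charpoly := by
  have hmapinv : (P⁻¹).map (C : ℝ →+* ℝ[X]) * P.map C = 1 := by
    rw [← Matrix.map_mul, nonsing_inv_mul _ hP]
    simp
  have hcomm : Matrix.scalar n (X : ℝ[X]) * P.map C = P.map C * Matrix.scalar n (X : ℝ[X]) :=
    (Matrix.scalar_commute (X : ℝ[X]) (fun r => Commute.all _ _) (P.map C)).eq
  have key : charmatrix (P * M * P⁻¹) * P.map C = P.map C * charmatrix M := by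
    rw [charmatrix, charmatrix]
    simp only [RingHom.mapMatrix_apply, sub_mul, mul_sub, hcomm]
    congr 1
    rw [Matrix.map_mul, Matrix.map_mul, mul_assoc, hmapinv, mul_one]
  have hdetP : (P.map (C : ℝ →+* ℝ[X])).det ≠ 0 := by
    rw [show P.map (C : ℝ →+* ℝ[X]) = (C : ℝ →+* ℝ[X]).mapMatrix P from rfl,
      ← RingHom.map_det]
    simpa using fun h => hP.ne_zero h
  have := congrArg Matrix.det key
  rw [det_mul, det_mul] at this
  rw [Matrix.charpoly, Matrix.charpoly]
  rw [mul_comm ((P.map C).det)] at this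
  exact mul_right_cancel₀ hdetP this

private lemma my_charpoly_diag {d : ℕ} (v : Fin d → ℝ) :
    (diagonal v).charpoly = ∏ i, (X - C (v i)) := by
  rw [charpoly_of_upperTriangular _ (blockTriangular_diagonal v)]
  simp

theorem simultaneous_diagonalizer_unique {d : ℕ}
    (S₁ S₂ W₁ W₂ : Matrix (Fin d) (Fin d) ℝ) (h1 : S₁.PosDef) (h2 : S₂.PosDef)
    (hdist : ∃ ev : Fin d → ℝ, Function.Injective ev ∧
      (S₁⁻¹ * S₂).charpoly = ∏ i, (X - C (ev i)))
    (hW₁ : IsUnit W₁.det) (hW₂ : IsUnit W₂.det)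
    (hd11 : (W₁ᵀ * S₁ * W₁).IsDiag) (hd12 : (W₁ᵀ * S₂ * W₁).IsDiag)
    (hd21 : (W₂ᵀ * S₁ * W₂).IsDiag) (hd22 : (W₂ᵀ * S₂ * W₂).IsDiag) :
    ∃ (σ : Equiv.Perm (Fin d)) (D : Matrix (Fin d) (Fin d) ℝ),
      D.IsDiag ∧ IsUnit D.det ∧ W₂ = W₁ * σ.permMatrix ℝ * D := by
  obtain ⟨ev, hevinj, hev⟩ := hdist
  -- diagonal entries of congruences are positive for S₁
  have entry_eq : ∀ (S W : Matrix (Fin d) (Fin d) ℝ) (i : Fin d),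
      (Wᵀ * S * W) i i = star (fun j => W j i) ⬝ᵥ (S *ᵥ fun j => W j i) := by
    intro S W i
    simp only [Matrix.mul_apply, Matrix.transpose_apply, dotProduct, Matrix.mulVec,
      star_trivial, Finset.sum_mul, Finset.mul_sum]
    rw [Finset.sum_comm]
    exact Finset.sum_congr rfl fun k _ => Finset.sum_congr rfl fun j _ => by ring
  have colW : ∀ (W : Matrix (Fin d) (Fin d) ℝ), IsUnit W.det → ∀ i : Fin d,
      (fun j => W j i) ≠ 0 := by
    intro W hW i h
    refine hW.ne_zero (det_eq_zero_of_column_eq_zero i fun j => ?_)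
    exact congrFun h j
  have pos_entry : ∀ (W : Matrix (Fin d) (Fin d) ℝ), IsUnit W.det → ∀ i : Fin d,
      0 < (Wᵀ * S₁ * W) i i := by
    intro W hW i
    rw [entry_eq]
    exact h1.dotProduct_mulVec_pos (colW W hW i)
  -- names
  set a : Fin d → ℝ := fun i => (W₁ᵀ * S₁ * W₁) i i with ha
  set b : Fin d → ℝ := fun i => (W₁ᵀ * S₂ * W₁) i i with hb
  set a₂ : Fin d → ℝ := fun i => (W₂ᵀ * S₁ * W₂) i i with ha₂
  set b₂ : Fin d → ℝ := fun i => (W₂ᵀ * S₂ * W₂) i i with hb₂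
  have hA₁ : W₁ᵀ * S₁ * W₁ = diagonal a := (hd11.diagonal_diag).symm
  have hB₁ : W₁ᵀ * S₂ * W₁ = diagonal b := (hd12.diagonal_diag).symm
  have hA₂ : W₂ᵀ * S₁ * W₂ = diagonal a₂ := (hd21.diagonal_diag).symm
  have hB₂ : W₂ᵀ * S₂ * W₂ = diagonal b₂ := (hd22.diagonal_diag).symm
  have hapos : ∀ i, 0 < a i := pos_entry W₁ hW₁
  have ha₂pos : ∀ i, 0 < a₂ i := pos_entry W₂ hW₂
  have hane : ∀ i, a i ≠ 0 := fun i => (hapos i).ne'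
  have ha₂ne : ∀ i, a₂ i ≠ 0 := fun i => (ha₂pos i).ne'
  have hWT : IsUnit W₁ᵀ.det := by rwa [det_transpose]
  -- express S₁, S₂
  have conj_eq : ∀ M : Matrix (Fin d) (Fin d) ℝ, W₁ᵀ⁻¹ * (W₁ᵀ * M * W₁) * W₁⁻¹ = M := by
    intro M
    rw [show W₁ᵀ * M * W₁ = W₁ᵀ * (M * W₁) from mul_assoc _ _ _, ← mul_assoc W₁ᵀ⁻¹,
      nonsing_inv_mul _ hWT, one_mul, mul_assoc, mul_nonsing_inv _ hW₁, mul_one]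
  have hS₁ : S₁ = W₁ᵀ⁻¹ * diagonal a * W₁⁻¹ := by rw [← hA₁, conj_eq]
  have hS₂ : S₂ = W₁ᵀ⁻¹ * diagonal b * W₁⁻¹ := by rw [← hB₁, conj_eq]
  -- μ and its injectivity
  set μ : Fin d → ℝ := fun i => (a i)⁻¹ * b i with hμ
  have hdiaga : IsUnit (diagonal a).det := by
    rw [det_diagonal]
    exact isUnit_iff_ne_zero.2 (Finset.prod_ne_zero_iff.2 fun i _ => hane i)
  have hM : S₁⁻¹ * S₂ = W₁ * ((diagonal a)⁻¹ * diagonal b) * W₁⁻¹ := by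
    rw [hS₁, hS₂, Matrix.mul_inv_rev, Matrix.mul_inv_rev, nonsing_inv_nonsing_inv _ hWT]
    calc W₁⁻¹⁻¹ * ((diagonal a)⁻¹ * W₁ᵀ) * (W₁ᵀ⁻¹ * diagonal b * W₁⁻¹)
        = W₁ * ((diagonal a)⁻¹ * ((W₁ᵀ * W₁ᵀ⁻¹) * diagonal b)) * W₁⁻¹ := by
          rw [nonsing_inv_nonsing_inv _ hW₁]; noncomm_ring
      _ = W₁ * ((diagonal a)⁻¹ * diagonal b) * W₁⁻¹ := by
          rw [mul_nonsing_inv _ hWT, one_mul]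
  have hdiagμ : (diagonal a)⁻¹ * diagonal b = diagonal μ := by
    have hinva : (diagonal a)⁻¹ = diagonal (fun i => (a i)⁻¹) := by
      apply inv_eq_right_inv
      rw [diagonal_mul_diagonal]
      have h0 : (fun i => a i * (a i)⁻¹) = fun _ => (1 : ℝ) := by
        funext i; exact mul_inv_cancel₀ (hane i)
      rw [h0, diagonal_one]
    rw [hinva, diagonal_mul_diagonal]
  have hchar : (∏ i, (X - C (μ i))) = ∏ i, (X - C (ev i)) := by
    rw [← my_charpoly_diag μ, ← hdiagμ, ← my_charpoly_conj W₁ _ hW₁, ← hM, hev]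
  have hroots : (Finset.univ.val.map μ) = Finset.univ.val.map ev := by
    have r1 : ∀ f : Fin d → ℝ, (∏ i, (X - C (f i))).roots = Finset.univ.val.map f := by
      intro f
      have := roots_multiset_prod_X_sub_C (Finset.univ.val.map f)
      rwa [Multiset.map_map] at this
    rw [← r1 μ, ← r1 ev, hchar]
  have hμinj : Function.Injective μ := by
    intro i j hij
    have hnodup : (Finset.univ.val.map μ).Nodup := by
      rw [hroots]
      exact Finset.univ.nodup.map hevinj
    exact Multiset.inj_on_of_nodup_map hnodup i (Finset.mem_univ i) j (Finset.mem_univ j) hij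
  -- set up K
  set K : Matrix (Fin d) (Fin d) ℝ := W₁⁻¹ * W₂ with hKdef
  have hWK : W₂ = W₁ * K := by
    rw [hKdef, ← mul_assoc, mul_nonsing_inv _ hW₁, one_mul]
  have hKunit : IsUnit K.det := by
    rw [hKdef, det_mul]
    exact (isUnit_nonsing_inv_det _ hW₁).mul hW₂
  have hKT : IsUnit Kᵀ.det := by rwa [det_transpose]
  have hcongr : ∀ M : Matrix (Fin d) (Fin d) ℝ, W₂ᵀ * M * W₂ = Kᵀ * (W₁ᵀ * M * W₁) * K := by
    intro M
    rw [hWK, transpose_mul]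
    noncomm_ring
  have hA₂K : Kᵀ * (diagonal a * K) = diagonal a₂ * 1 := by
    have := hcongr S₁
    rw [hA₁, hA₂] at this
    rw [mul_one, ← mul_assoc, this, mul_assoc]
  have key : diagonal b * (K * diagonal a₂) = diagonal a * (K * diagonal b₂) := by
    have h1 : Kᵀ * (diagonal b * (K * diagonal a₂)) = Kᵀ * (diagonal a * (K * diagonal b₂)) := by
      have e1 : Kᵀ * (diagonal b * (K * diagonal a₂)) = (Kᵀ * diagonal b * K) * diagonal a₂ := by
        noncomm_ring
      have e2 : Kᵀ * (diagonal a * (K * diagonal b₂)) = (Kᵀ * diagonal a * K) * diagonal b₂ := by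
        noncomm_ring
      have hb2 : Kᵀ * diagonal b * K = diagonal b₂ := by
        have := hcongr S₂; rw [hB₁, hB₂] at this; rw [← this]
      have ha2 : Kᵀ * diagonal a * K = diagonal a₂ := by
        have := hcongr S₁; rw [hA₁, hA₂] at this; rw [← this]
      rw [e1, e2, hb2, ha2, diagonal_mul_diagonal, diagonal_mul_diagonal]
      have hc : (fun i => b₂ i * a₂ i) = fun i => a₂ i * b₂ i := by
        funext i; ring
      rw [hc]
    have := congrArg (fun X => Kᵀ⁻¹ * X) h1
    simpa [← mul_assoc, nonsing_inv_mul _ hKT] using this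
  -- entrywise consequence
  have hent : ∀ i j, K i j ≠ 0 → μ i = (a₂ j)⁻¹ * b₂ j := by
    intro i j hij
    have h0 := congrFun (congrFun key i) j
    rw [diagonal_mul, mul_diagonal, diagonal_mul, mul_diagonal] at h0
    have h'' : b i * a₂ j = a i * b₂ j :=
      mul_right_cancel₀ hij (by linear_combination h0 :
        (b i * a₂ j) * K i j = (a i * b₂ j) * K i j)
    show (a i)⁻¹ * b i = (a₂ j)⁻¹ * b₂ j
    rw [inv_mul_eq_div, inv_mul_eq_div, div_eq_div_iff (hane i) (ha₂ne j)]
    linear_combination h''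
  -- each column has a unique nonzero entry
  have hex : ∀ j, ∃ i, K i j ≠ 0 := by
    intro j
    by_contra h
    push_neg at h
    exact hKunit.ne_zero (det_eq_zero_of_column_eq_zero j h)
  choose p hp using hex
  have huniq : ∀ j i, K i j ≠ 0 → i = p j := by
    intro j i h
    exact hμinj ((hent i j h).trans (hent (p j) j (hp j)).symm)
  have hsurj : Function.Surjective p := by
    intro i
    by_contra h
    push_neg at h
    refine hKunit.ne_zero (det_eq_zero_of_row_eq_zero i fun j => ?_)
    by_contra hz
    exact h j (huniq j i hz).symm
  have hbij : Function.Bijective p :=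
    ⟨Finite.injective_iff_surjective.2 hsurj, hsurj⟩
  refine ⟨(Equiv.ofBijective p hbij).symm, diagonal (fun j => K (p j) j), isDiag_diagonal _,
    ?_, ?_⟩
  · rw [det_diagonal]
    exact isUnit_iff_ne_zero.2 (Finset.prod_ne_zero_iff.2 fun j _ => hp j)
  · rw [hWK, mul_assoc]
    congr 1
    ext i j
    rw [mul_diagonal, Equiv.Perm.permMatrix, (show ∀ (σ : Equiv.Perm (Fin d)) i j, σ.toPEquiv.toMatrix i j =
      (1 : Matrix (Fin d) (Fin d) ℝ) (σ i) j from by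
        intro σ i j; simp [PEquiv.toMatrix_apply, Matrix.one_apply]), Matrix.one_apply]
    by_cases h : (Equiv.ofBijective p hbij).symm i = j
    · have hpj : p j = i := by
        rw [← h]; exact (Equiv.ofBijective p hbij).apply_symm_apply i
      rw [if_pos h, hpj, one_mul]
    · rw [if_neg h, zero_mul]
      by_contra hz
      have := huniq j i hz
      apply h
      rw [this]
      exact (Equiv.ofBijective p hbij).symm_apply_apply j
end

section
/- If A is symmetric positive-definite and W is an invertible matrix such that Wᵀ A W is diagonal, then DE(Wᵀ A W) = 0, and conversely if DE(Wᵀ A W) = 0 then Wᵀ A W is diagonal. -/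
open Matrix

/-- The diagonalization error of a matrix `A`. -/
noncomputable def DE {d : ℕ} (A : Matrix (Fin d) (Fin d) ℝ) : ℝ :=
  Real.log ((Matrix.diagonal fun i => A i i).det / A.det)

lemma posDef_conj_aux {d : ℕ} (A W : Matrix (Fin d) (Fin d) ℝ)
    (hA : A.PosDef) (hW : IsUnit W.det) : (Wᵀ * A * W).PosDef := by
  have h1 := hA.posSemidef.conjTranspose_mul_mul_same W
  rw [conjTranspose_eq_transpose_of_trivial] at h1
  refine Matrix.PosDef.of_dotProduct_mulVec_pos h1.1 fun x hx => ?_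
  have hWx : W *ᵥ x ≠ 0 := by
    intro h
    apply hx
    have hinj : Function.Injective W.mulVec :=
      Matrix.mulVec_injective_iff_isUnit.2 ((Matrix.isUnit_iff_isUnit_det W).2 hW)
    exact hinj (by simpa using h)
  have := hA.dotProduct_mulVec_pos hWx
  simpa [Matrix.mul_assoc, ← Matrix.mulVec_mulVec, dotProduct_mulVec,
    Matrix.vecMul_transpose] using this

set_option maxHeartbeats 400000 in
/-- Hadamard-type result via LDL: determinant vs product of diagonal entries,
with equality forcing diagonality. -/
lemma hadamard_aux {d : ℕ} {B : Matrix (Fin d) (Fin d) ℝ} (hB : B.PosDef) :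
    B.det ≤ ∏ i, B i i ∧ (B.det = ∏ i, B i i → B.IsDiag) := by
  letI : WellFoundedLT (Fin d) := inferInstance
  letI : LocallyFiniteOrderBot (Fin d) := inferInstance
  set M := LDL.lowerInv hB with hM
  set D := LDL.diagEntries hB with hD
  have hdiagD : LDL.diag hB = Matrix.diagonal D := by
    ext i j
    by_cases h : i = j <;> simp [LDL.diag, Matrix.diagonal_apply, h, hD]
  have hMtri : M.BlockTriangular OrderDual.toDual := fun i j h =>
    LDL.lowerInv_triangular hB h
  haveI hMinv : Invertible M := by
    have h : (fun a b => LinearOrder.toDecidableEq a b : DecidableEq (Fin d))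
        = instDecidableEqFin d := Subsingleton.elim _ _
    have hI := LDL.invertibleLowerInv hB
    rw [h] at hI
    exact hI
  set L := M⁻¹ with hL
  have hDeq : Matrix.diagonal D = M * B * Mᵀ := by
    have := LDL.diag_eq_lowerInv_conj hB
    rw [hdiagD, conjTranspose_eq_transpose_of_trivial] at this
    exact this
  -- B = L * diagonal D * Lᵀ
  have hBeq : B = L * Matrix.diagonal D * Lᵀ := by
    haveI : Invertible (Mᵀ) := Matrix.invertibleTranspose M
    rw [hDeq, hL, Matrix.transpose_nonsing_inv]
    rw [Matrix.mul_assoc M B (Mᵀ), Matrix.inv_mul_cancel_left_of_invertible,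
      Matrix.mul_inv_cancel_right_of_invertible]
  -- L is lower triangular
  have hLtri : L.BlockTriangular OrderDual.toDual :=
    Matrix.blockTriangular_inv_of_blockTriangular hMtri
  have hLij : ∀ i j : Fin d, i < j → L i j = 0 := fun i j h => hLtri (by simpa using h)
  -- D entries are positive
  have hDposdef : (Matrix.diagonal D).PosDef := by
    rw [hDeq, ← Matrix.conjTranspose_eq_transpose_of_trivial M]
    refine Matrix.PosDef.of_dotProduct_mulVec_pos (hB.posSemidef.mul_mul_conjTranspose_same M).1 fun x hx => ?_
    have hMx : Mᴴ *ᵥ x ≠ 0 := by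
      intro h
      apply hx
      letI : Invertible (Mᴴ) := Matrix.invertibleConjTranspose M
      have hinj : Function.Injective (Mᴴ).mulVec :=
        Matrix.mulVec_injective_of_invertible (Mᴴ)
      exact hinj (by simpa using h)
    have := hB.dotProduct_mulVec_pos hMx
    simpa [Matrix.mul_assoc, ← Matrix.mulVec_mulVec, dotProduct_mulVec,
      Matrix.vecMul_transpose, Matrix.mulVec_transpose, Matrix.vecMul_vecMul,
      Matrix.conjTranspose_eq_transpose_of_trivial] using this
  have hDpos : ∀ i, 0 < D i := by
    intro i
    have := hDposdef.dotProduct_mulVec_pos (x := Pi.single i 1) (by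
      intro h
      have := congrFun h i
      simp at this)
    simpa [Matrix.mulVec_diagonal, dotProduct, Pi.single_apply,
      Finset.sum_ite_eq'] using this
  -- entries of B
  have hBentry : ∀ i j : Fin d, B i j = ∑ k, D k * (L i k * L j k) := by
    intro i j
    rw [hBeq]
    simp [Matrix.mul_apply, Matrix.diagonal_apply, Finset.sum_ite_eq,
      Matrix.transpose_apply]
    congr 1
    ext k
    ring
  -- determinant of B
  have hdetL : L.det = ∏ i, L i i := Matrix.det_of_lowerTriangular L hLtri
  have hdetB : B.det = ∏ i, D i * (L i i * L i i) := by
    rw [hBeq]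
    rw [Matrix.det_mul, Matrix.det_mul, Matrix.det_transpose, Matrix.det_diagonal, hdetL]
    rw [← Finset.prod_mul_distrib, ← Finset.prod_mul_distrib]
    congr 1
    ext i
    ring
  -- each diagonal entry dominates
  have hdiag_ge : ∀ i : Fin d, D i * (L i i * L i i) ≤ B i i := by
    intro i
    rw [hBentry i i]
    exact Finset.single_le_sum (f := fun k => D k * (L i k * L i k))
      (fun k _ => mul_nonneg (hDpos k).le (mul_self_nonneg _)) (Finset.mem_univ i)
  constructor
  · rw [hdetB]
    refine Finset.prod_le_prod (fun i _ => mul_nonneg (hDpos i).le (mul_self_nonneg _))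
      (fun i _ => hdiag_ge i)
  · intro hEqDet
    -- positivity of the lower bound terms: detB > 0 so each factor nonzero
    have hdetBpos : 0 < B.det := hB.det_pos
    have hfacpos : ∀ i : Fin d, 0 < D i * (L i i * L i i) := by
      intro i
      rcases (mul_nonneg (hDpos i).le (mul_self_nonneg (L i i))).lt_or_eq with h | h
      · exact h
      · exfalso
        have : B.det = 0 := by
          rw [hdetB]
          exact Finset.prod_eq_zero (Finset.mem_univ i) h.symm
        exact hdetBpos.ne' this
    -- equality termwise
    have hterm : ∀ i : Fin d, B i i = D i * (L i i * L i i) := by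
      by_contra hcon
      push_neg at hcon
      obtain ⟨i, hi⟩ := hcon
      have hlt : D i * (L i i * L i i) < B i i := lt_of_le_of_ne (hdiag_ge i) (Ne.symm hi)
      have : ∏ j, D j * (L j j * L j j) < ∏ j, B j j :=
        Finset.prod_lt_prod (fun j _ => hfacpos j) (fun j _ => hdiag_ge j)
          ⟨i, Finset.mem_univ i, hlt⟩
      rw [← hdetB, hEqDet] at this
      exact lt_irrefl _ this
    -- off-diagonal entries of L vanish
    have hLoff : ∀ i j : Fin d, j ≠ i → L i j = 0 := by
      intro i j hji
      have hsum : ∑ k, D k * (L i k * L i k) = D i * (L i i * L i i) := by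
        rw [← hBentry i i, hterm i]
      have hzero : ∑ k ∈ Finset.univ.erase i, D k * (L i k * L i k) = 0 := by
        have h2 : D i * (L i i * L i i) + ∑ k ∈ Finset.univ.erase i, D k * (L i k * L i k)
            = ∑ k, D k * (L i k * L i k) :=
          Finset.add_sum_erase Finset.univ (fun k => D k * (L i k * L i k)) (Finset.mem_univ i)
        rw [hsum] at h2
        linarith
      have hknonneg : ∀ k ∈ Finset.univ.erase i, 0 ≤ D k * (L i k * L i k) :=
        fun k _ => mul_nonneg (hDpos k).le (mul_self_nonneg _)
      have hkzero := (Finset.sum_eq_zero_iff_of_nonneg hknonneg).1 hzero j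
        (Finset.mem_erase.2 ⟨hji, Finset.mem_univ j⟩)
      have : L i j * L i j = 0 := by
        rcases mul_eq_zero.1 hkzero with h | h
        · exact absurd h (hDpos j).ne'
        · exact h
      exact (mul_self_eq_zero).1 this
    -- conclude B is diagonal
    intro i j hij
    rw [hBentry i j]
    apply Finset.sum_eq_zero
    intro k _
    by_cases hki : k = i
    · have : L j k = 0 := hLoff j k (by simpa [hki] using hij)
      simp [this]
    · have : L i k = 0 := hLoff i k hki
      simp [this]

theorem diagonalization_error_zero_iff {d : ℕ}
    (A W : Matrix (Fin d) (Fin d) ℝ) (hA : A.PosDef) (hW : IsUnit W.det) :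
    (Wᵀ * A * W).IsDiag ↔ DE (Wᵀ * A * W) = 0 := by
  set B := Wᵀ * A * W with hBdef
  have hB : B.PosDef := posDef_conj_aux A W hA hW
  have hdetBpos : 0 < B.det := hB.det_pos
  constructor
  · intro hdiag
    have : (Matrix.diagonal fun i => B i i) = B := hdiag.diagonal_diag
    rw [DE, this, div_self hdetBpos.ne']
    exact Real.log_one
  · intro hDE
    have had := hadamard_aux hB
    have hprod : (Matrix.diagonal fun i => B i i).det = ∏ i, B i i :=
      Matrix.det_diagonal
    have hge : B.det ≤ ∏ i, B i i := had.1
    rw [DE, hprod] at hDE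
    have hratio : (∏ i, B i i) / B.det = 1 := by
      rcases Real.log_eq_zero.1 hDE with h | h | h
      · exfalso
        have : 0 < (∏ i, B i i) / B.det :=
          div_pos (lt_of_lt_of_le hdetBpos hge) hdetBpos
        rw [h] at this; exact lt_irrefl _ this
      · exact h
      · exfalso
        have : 0 < (∏ i, B i i) / B.det :=
          div_pos (lt_of_lt_of_le hdetBpos hge) hdetBpos
        rw [h] at this; linarith
    have heq : B.det = ∏ i, B i i := by
      field_simp at hratio
      linarith
    exact had.2 heq
end

section
/- Let M_{ij}(a,b) be smooth functions on an open set U ⊆ ℝ², indexed by i,j ≥ 0, satisfying ∂M_{ij}/∂a = M_{i+1,j} and ∂M_{ij}/∂b = M_{i,j+1}. Suppose M₀₀ M₁₁ = M₁₀ M₀₁ identically on U and M₀₀ > 0 on U. Then M₀₀ M_{ij} = M_{i0} M_{0j} on U for all i, j ≥ 0. -/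
lemma eq_deriv_of_eqOn {f g : ℝ → ℝ} {s : Set ℝ} (hs : IsOpen s) {x : ℝ} (hx : x ∈ s)
    (hfg : ∀ y ∈ s, f y = g y) {d1 d2 : ℝ} (h1 : HasDerivAt f d1 x)
    (h2 : HasDerivAt g d2 x) : d1 = d2 :=
  h1.unique (h2.congr_of_eventuallyEq (by
    filter_upwards [hs.mem_nhds hx] with y hy
    exact hfg y hy))

theorem moment_factorization_induction (U : Set (ℝ × ℝ)) (hU : IsOpen U)
    (M : ℕ → ℕ → ℝ → ℝ → ℝ)
    (hda : ∀ (i j : ℕ), ∀ p ∈ U,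
      HasDerivAt (fun a' => M i j a' p.2) (M (i + 1) j p.1 p.2) p.1)
    (hdb : ∀ (i j : ℕ), ∀ p ∈ U,
      HasDerivAt (fun b' => M i j p.1 b') (M i (j + 1) p.1 p.2) p.2)
    (hpos : ∀ p ∈ U, 0 < M 0 0 p.1 p.2)
    (hlin : ∀ p ∈ U,
      M 0 0 p.1 p.2 * M 1 1 p.1 p.2 = M 1 0 p.1 p.2 * M 0 1 p.1 p.2) :
    ∀ (i j : ℕ), ∀ p ∈ U,
      M 0 0 p.1 p.2 * M i j p.1 p.2 = M i 0 p.1 p.2 * M 0 j p.1 p.2 := by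
  have A : ∀ i, ∀ p ∈ U,
      M 0 0 p.1 p.2 * M i 1 p.1 p.2 = M i 0 p.1 p.2 * M 0 1 p.1 p.2 := by
    intro i
    induction i with
    | zero => intro p hp; ring
    | succ i ih =>
      intro p hp
      have hs : IsOpen {a : ℝ | (a, p.2) ∈ U} :=
        hU.preimage (by continuity)
      have hd : M 1 0 p.1 p.2 * M i 1 p.1 p.2 + M 0 0 p.1 p.2 * M (i + 1) 1 p.1 p.2
          = M (i + 1) 0 p.1 p.2 * M 0 1 p.1 p.2 + M i 0 p.1 p.2 * M 1 1 p.1 p.2 :=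
        eq_deriv_of_eqOn hs (show p.1 ∈ _ from hp)
          (fun a ha => ih (a, p.2) ha)
          ((hda 0 0 p hp).mul (hda i 1 p hp))
          ((hda i 0 p hp).mul (hda 0 1 p hp))
      have h2 := hlin p hp
      have h3 := ih p hp
      refine mul_left_cancel₀ (hpos p hp).ne' ?_
      linear_combination M 0 0 p.1 p.2 * hd + M i 0 p.1 p.2 * h2 - M 1 0 p.1 p.2 * h3
  intro i j
  induction j with
  | zero => intro p hp; ring
  | succ j ih =>
    intro p hp
    have hs : IsOpen {b : ℝ | (p.1, b) ∈ U} :=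
      hU.preimage (by continuity)
    have hd : M 0 1 p.1 p.2 * M i j p.1 p.2 + M 0 0 p.1 p.2 * M i (j + 1) p.1 p.2
        = M i 1 p.1 p.2 * M 0 j p.1 p.2 + M i 0 p.1 p.2 * M 0 (j + 1) p.1 p.2 :=
      eq_deriv_of_eqOn hs (show p.2 ∈ _ from hp)
        (fun b hb => ih (p.1, b) hb)
        ((hdb 0 0 p hp).mul (hdb i j p hp))
        ((hdb i 0 p hp).mul (hdb 0 j p hp))
    have hA := A i p hp
    have h3 := ih p hp
    refine mul_left_cancel₀ (hpos p hp).ne' ?_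
    linear_combination M 0 0 p.1 p.2 * hd + M 0 j p.1 p.2 * hA - M 0 1 p.1 p.2 * h3
end
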